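/- Assume Assumption 1 holds. Let ν be a finite nonnegative Borel measure on 𝒮, and let (k(j))_{j≥1} and (n(j))_{j≥1} be increasing sequences of positive integers with k(j) → ∞ such that Σ_{j≥1} ν{ S ∈ 𝒮⁺ : α_l(S) ≠ 0 for all l ≥ 1, and (Σ_{l>k(j)} α_l(S)²)^{1/2} ≤ 2δ_{n(j)} } < ∞. Then: (i) if C has finite rank q ≥ 1, then with probability 1, for all sufficiently large j one has i(Ĉ_{n(j)}, δ_{n(j)}) = q and q ≤ k(j) (so the procedure declares H_q eventually); (ii) there exists a ν-negligible set N₀ ⊆ 𝒮⁺ such that whenever C has infinite rank and C ∉ N₀, with probability 1, for all sufficiently large j one has i(Ĉ_{n(j)}, δ_{n(j)}) > k(j) (so the procedure declares H_∞ eventually). -/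

import Mathlib

open MeasureTheory Filter

/-- Abstract singular-value data on the (Hilbert) space `𝒮` of Hilbert–Schmidt operators on a
separable infinite-dimensional real Hilbert space `H`.  `IsPos S` encodes `S ∈ 𝒮⁺` (nonnegative
self-adjoint), and `α S l` is the `(l+1)`-st singular value of `S` (so `α S 0 ≥ α S 1 ≥ … ≥ 0`,
listed with multiplicity).  The field `mirsky` encodes the Schmidt–Mirsky fact that
`S ↦ ‖S - Q_j(S)‖_𝒮 = (∑_{l > j} α_l(S)²)^{1/2}` (distance to the rank-`j` operators)
is `1`-Lipschitz in the Hilbert–Schmidt norm. -/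
structure SingularValueData (𝒮 : Type*) [NormedAddCommGroup 𝒮] [MeasurableSpace 𝒮] where
  IsPos : 𝒮 → Prop
  α : 𝒮 → ℕ → ℝ
  nonneg : ∀ S l, 0 ≤ α S l
  antitone : ∀ S l, α S (l + 1) ≤ α S l
  sq_summable : ∀ S, Summable fun l => α S l ^ 2
  mirsky : ∀ A B : 𝒮, ∀ j : ℕ,
    Real.sqrt (∑' l, α A (j + l) ^ 2) ≤ Real.sqrt (∑' l, α B (j + l) ^ 2) + ‖A - B‖
  measurable_alpha : ∀ l, Measurable fun S => α S l
  measurableSet_pos : MeasurableSet {S | IsPos S}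
  measurable_tail : ∀ j, Measurable fun S => Real.sqrt (∑' l, α S (j + l) ^ 2)

namespace SingularValueData

variable {𝒮 : Type*} [NormedAddCommGroup 𝒮] [MeasurableSpace 𝒮]

/-- `tail S j = ‖S - Q_j(S)‖_𝒮 = (∑_{l > j} α_l(S)²)^{1/2}` (singular values `1`-indexed). -/
noncomputable def tail (sv : SingularValueData 𝒮) (S : 𝒮) (j : ℕ) : ℝ :=
  Real.sqrt (∑' l, sv.α S (j + l) ^ 2)

/-- `i(S, δ) = min {j ≥ 1 : ‖S - Q_j(S)‖_𝒮 < δ}`. -/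
noncomputable def iDim (sv : SingularValueData 𝒮) (S : 𝒮) (δ : ℝ) : ℕ :=
  sInf {j | 1 ≤ j ∧ sv.tail S j < δ}

end SingularValueData

section Aux

namespace SingularValueData

variable {𝒮 : Type*} [NormedAddCommGroup 𝒮] [MeasurableSpace 𝒮]

lemma tail_nonneg (sv : SingularValueData 𝒮) (S : 𝒮) (j : ℕ) : 0 ≤ sv.tail S j :=
  Real.sqrt_nonneg _

lemma summable_shift (sv : SingularValueData 𝒮) (S : 𝒮) (j : ℕ) :
    Summable fun l => sv.α S (j + l) ^ 2 := by
  have := (summable_nat_add_iff (f := fun l => sv.α S l ^ 2) j).2 (sv.sq_summable S)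
  refine this.congr fun l => by rw [add_comm]

lemma tail_antitone (sv : SingularValueData 𝒮) (S : 𝒮) : Antitone (sv.tail S) := by
  intro m j hmj
  refine Real.sqrt_le_sqrt ?_
  obtain ⟨d, rfl⟩ := Nat.exists_eq_add_of_le hmj
  exact Summable.tsum_le_tsum_of_inj (fun l => d + l) (add_right_injective d)
    (fun c _ => sq_nonneg _) (fun l => le_of_eq (by rw [add_assoc])) (sv.summable_shift S (m + d))
    (sv.summable_shift S m)

lemma tail_mirsky (sv : SingularValueData 𝒮) (A B : 𝒮) (j : ℕ) :
    sv.tail A j ≤ sv.tail B j + ‖A - B‖ := sv.mirsky A B j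

lemma tail_tendsto_zero (sv : SingularValueData 𝒮) (S : 𝒮) :
    Filter.Tendsto (sv.tail S) Filter.atTop (nhds 0) := by
  have hf := sv.sq_summable S
  have h1 : Filter.Tendsto (fun j => ∑' l, sv.α S (j + l) ^ 2) Filter.atTop (nhds 0) := by
    have h2 : ∀ j : ℕ, ∑' l, sv.α S (j + l) ^ 2
        = (∑' l, sv.α S l ^ 2) - ∑ i ∈ Finset.range j, sv.α S i ^ 2 := by
      intro j
      have := Summable.sum_add_tsum_nat_add (f := fun l => sv.α S l ^ 2) j hf
      have he : ∑' l, sv.α S (j + l) ^ 2 = ∑' l, sv.α S (l + j) ^ 2 :=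
        tsum_congr fun l => by rw [add_comm]
      linarith
    simp only [h2]
    have := (hf.hasSum.tendsto_sum_nat).const_sub (∑' l, sv.α S l ^ 2)
    simpa using this
  have : Filter.Tendsto (fun j => Real.sqrt (∑' l, sv.α S (j + l) ^ 2))
      Filter.atTop (nhds (Real.sqrt 0)) :=
    (Real.continuous_sqrt.continuousAt).tendsto.comp h1
  rw [Real.sqrt_zero] at this; exact this

end SingularValueData

end Aux

set_option maxHeartbeats 1000000 in
/-- **Theorem 1.**  Under Assumption 1, let `ν` be a finite (Borel) measure on
`𝒮`, and let `k(j)`, `n(j)` be increasing sequences of positive integers with `k(j) → ∞`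
satisfying the summability condition
`∑_j ν {S ∈ 𝒮⁺ : α_l(S) ≠ 0 ∀ l, (∑_{l > k(j)} α_l(S)²)^{1/2} ≤ 2 δ_{n(j)}} < ∞`.
Then (i) if `C` has finite rank `q ≥ 1`, almost surely the procedure eventually declares
`H_q` (i.e. `i(Ĉ_{n(j)}, δ_{n(j)}) = q ≤ k(j)` for all large `j`); and (ii) there is a
`ν`-negligible set `N₀ ⊆ 𝒮⁺` such that if `C` has infinite rank and `C ∉ N₀`, almost surely
the procedure eventually declares `H_∞` (i.e. `i(Ĉ_{n(j)}, δ_{n(j)}) > k(j)` for all large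
`j`). -/

theorem detection_of_finite_expressibility_in_some_basis
    {𝒮 : Type*} [NormedAddCommGroup 𝒮] [MeasurableSpace 𝒮] [BorelSpace 𝒮]
    (sv : SingularValueData 𝒮)
    {Ω : Type*} [MeasurableSpace Ω] (ℙ : Measure Ω) [IsProbabilityMeasure ℙ]
    (Chat : ℕ → Ω → 𝒮) (hChat : ∀ n, Measurable (Chat n))
    (C : 𝒮) (hC : sv.IsPos C)
    (R : ℕ → ℝ) (hRpos : ∀ n, 0 < R n) (hRanti : StrictAnti R)
    (hRlim : Tendsto R atTop (nhds 0))
    (hrate : ∀ᵐ ω ∂ℙ, ∀ᶠ n in atTop, ‖Chat n ω - C‖ < R n)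
    (ε : ℝ) (hε : 0 < ε) (δ : ℕ → ℝ) (hδ : ∀ n, δ n = (1 + ε) * R n)
    (ν : Measure 𝒮) [IsFiniteMeasure ν]
    (n k : ℕ → ℕ) (hn : StrictMono n) (hkmono : Monotone k)
    (hktop : Tendsto k atTop atTop)
    (hn1 : ∀ j, 1 ≤ n j) (hk1 : ∀ j, 1 ≤ k j)
    (hsum : ∑' j, ν {S | sv.IsPos S ∧ (∀ l, sv.α S l ≠ 0) ∧
      sv.tail S (k j) ≤ 2 * δ (n j)} < ⊤) :
    (∀ q : ℕ, 1 ≤ q → sv.α C (q - 1) ≠ 0 → (∀ l, q ≤ l → sv.α C l = 0) →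
      ∀ᵐ ω ∂ℙ, ∀ᶠ j in atTop,
        sv.iDim (Chat (n j) ω) (δ (n j)) = q ∧ q ≤ k j) ∧
    (∃ N₀ : Set 𝒮, ν N₀ = 0 ∧ N₀ ⊆ {S | sv.IsPos S} ∧
      ((∀ l, sv.α C l ≠ 0) → C ∉ N₀ →
        ∀ᵐ ω ∂ℙ, ∀ᶠ j in atTop, k j < sv.iDim (Chat (n j) ω) (δ (n j)))) := by
  have hnj : Filter.Tendsto n atTop atTop := hn.tendsto_atTop
  constructor
  · -- Part (i)
    intro q hq1 hq0 hqz
    -- tail C q = 0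
    have htCq : sv.tail C q = 0 := by
      have h0 : ∀ l, sv.α C (q + l) ^ 2 = (0:ℝ) := fun l => by
        rw [hqz (q + l) (Nat.le_add_right q l)]; ring
      have : (∑' l, sv.α C (q + l) ^ 2) = 0 := by
        rw [tsum_congr h0, tsum_zero]
      simp [SingularValueData.tail, this]
    -- tail C (q-1) > 0
    have htCq1 : 0 < sv.tail C (q - 1) := by
      have hle : sv.α C (q - 1) ^ 2 ≤ ∑' l, sv.α C (q - 1 + l) ^ 2 := by
        have := Summable.le_tsum (sv.summable_shift C (q - 1)) 0 (fun l _ => sq_nonneg _)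
        simpa using this
      have h0 : 0 < sv.α C (q - 1) ^ 2 := by positivity
      exact Real.sqrt_pos.2 (lt_of_lt_of_le h0 hle)
    have hE2 : ∀ᶠ j in atTop, R (n j) < sv.tail C (q - 1) / (2 + ε) := by
      have hc : (0:ℝ) < sv.tail C (q - 1) / (2 + ε) := by positivity
      exact hnj.eventually ((hRlim.eventually (eventually_lt_nhds hc)))
    have hE3 : ∀ᶠ j in atTop, q ≤ k j := hktop.eventually_ge_atTop q
    filter_upwards [hrate] with ω hω
    have hE1 : ∀ᶠ j in atTop, ‖Chat (n j) ω - C‖ < R (n j) := hnj.eventually hω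
    filter_upwards [hE1, hE2, hE3] with j h1 h2 h3
    refine ⟨?_, h3⟩
    set S := Chat (n j) ω with hS
    have hRn : 0 < R (n j) := hRpos _
    have hδn : δ (n j) = (1 + ε) * R (n j) := hδ _
    -- q is in the set
    have hqmem : q ∈ {m | 1 ≤ m ∧ sv.tail S m < δ (n j)} := by
      refine ⟨hq1, ?_⟩
      have := sv.tail_mirsky S C q
      rw [htCq] at this
      nlinarith
    -- every member is ≥ q
    have hlb : ∀ m ∈ {m | 1 ≤ m ∧ sv.tail S m < δ (n j)}, q ≤ m := by
      rintro m ⟨hm1, hm2⟩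
      by_contra hlt
      push_neg at hlt
      have hmq : m ≤ q - 1 := by omega
      have h4 : sv.tail C (q - 1) ≤ sv.tail C m := sv.tail_antitone C hmq
      have h5 : sv.tail C m ≤ sv.tail S m + ‖C - S‖ := sv.tail_mirsky C S m
      rw [norm_sub_rev] at h5
      have h6 : R (n j) * (2 + ε) < sv.tail C (q - 1) :=
        (lt_div_iff₀ (by positivity : (0:ℝ) < 2 + ε)).1 h2
      rw [hδn] at hm2
      nlinarith
    exact le_antisymm (Nat.sInf_le hqmem) (hlb _ (Nat.sInf_mem ⟨q, hqmem⟩))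
  · -- Part (ii)
    set B : ℕ → Set 𝒮 := fun j => {S | sv.IsPos S ∧ (∀ l, sv.α S l ≠ 0) ∧
      sv.tail S (k j) ≤ 2 * δ (n j)} with hB
    refine ⟨limsup B atTop, measure_limsup_atTop_eq_zero hsum.ne, ?_, ?_⟩
    · intro x hx
      rw [mem_limsup_iff_frequently_mem] at hx
      obtain ⟨j, hj⟩ := hx.exists
      exact hj.1
    · intro hinf hCnot
      have hev : ∀ᶠ j in atTop, 2 * δ (n j) < sv.tail C (k j) := by
        rw [mem_limsup_iff_frequently_mem] at hCnot
        rw [Filter.not_frequently] at hCnot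
        filter_upwards [hCnot] with j hj
        by_contra hle
        push_neg at hle
        exact hj ⟨hC, hinf, hle⟩
      filter_upwards [hrate] with ω hω
      have hE1 : ∀ᶠ j in atTop, ‖Chat (n j) ω - C‖ < R (n j) := hnj.eventually hω
      filter_upwards [hE1, hev] with j h1 h2
      set S := Chat (n j) ω with hS
      have hRn : 0 < R (n j) := hRpos _
      have hδn : δ (n j) = (1 + ε) * R (n j) := hδ _
      have hδpos : 0 < δ (n j) := by rw [hδn]; positivity
      -- tail S (k j) > δ (n j)
      have h3 : sv.tail C (k j) ≤ sv.tail S (k j) + ‖C - S‖ := sv.tail_mirsky C S (k j)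
      rw [norm_sub_rev] at h3
      have h4 : δ (n j) < sv.tail S (k j) := by
        rw [hδn] at h2 ⊢
        nlinarith
      -- set is nonempty
      have hne : {m | 1 ≤ m ∧ sv.tail S m < δ (n j)}.Nonempty := by
        have := (sv.tail_tendsto_zero S).eventually (eventually_lt_nhds hδpos)
        obtain ⟨m, hm1, hm2⟩ := (this.and (eventually_ge_atTop 1)).exists
        exact ⟨m, hm2, hm1⟩
      have hmem := Nat.sInf_mem hne
      by_contra hle
      push_neg at hle
      have : sv.tail S (k j) ≤ sv.tail S (sv.iDim S (δ (n j))) :=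
        sv.tail_antitone S hle
      exact absurd (lt_of_le_of_lt this hmem.2) (not_lt.2 (le_of_lt h4))
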